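/- Let P be a k×k super-regular matrix over F_q, let s ≤ k, and let π be any k×s submatrix of P formed by choosing s columns. Write π = [π₁; π₂] with π₁ the top s×s block. Then π₁ is invertible, and consequently for k×s matrices W₁ (s×s) and W₂ ((k−s)×s), the quantities a(W₁ᵀπ₁ + W₂ᵀπ₂) + e·W₁π₁ (top s rows) and e·W₂π₁ (bottom k−s rows) determine W₂ uniquely (given e ≠ 0), and then determine W₁ uniquely provided a+e ≠ 0 and a−e ≠ 0. -/

import Mathlib

open Matrix

/-- A matrix is super-regular if every square submatrix is nonsingular. -/
def SuperRegular {F : Type*} [Field F] {k : ℕ} (P : Matrix (Fin k) (Fin k) F) : Prop :=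
  ∀ (m : ℕ) (r c : Fin m → Fin k), Function.Injective r → Function.Injective c →
    (P.submatrix r c).det ≠ 0

theorem mscr_file_recovery_step {F : Type*} [Field F] [Fintype F] {k s : ℕ} (hs : s ≤ k)
    (P : Matrix (Fin k) (Fin k) F) (hP : SuperRegular P)
    (c : Fin s → Fin k) (hc : Function.Injective c)
    (π₁ : Matrix (Fin s) (Fin s) F) (π₂ : Matrix (Fin (k - s)) (Fin s) F)
    (hπ₁ : π₁ = Matrix.of fun i j => P (Fin.castLE hs i) (c j))
    (hπ₂ : π₂ = Matrix.of fun (i : Fin (k - s)) j => P ⟨s + i.val, by omega⟩ (c j))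
    (a e : F) (he : e ≠ 0) (hae : a + e ≠ 0) (hae' : a - e ≠ 0) :
    IsUnit π₁.det ∧
    ∀ (W₁ W₁' : Matrix (Fin s) (Fin s) F) (W₂ W₂' : Matrix (Fin (k - s)) (Fin s) F),
      a • (W₁ᵀ * π₁ + W₂ᵀ * π₂) + e • (W₁ * π₁)
          = a • (W₁'ᵀ * π₁ + W₂'ᵀ * π₂) + e • (W₁' * π₁) →
      e • (W₂ * π₁) = e • (W₂' * π₁) →
      W₂ = W₂' ∧ W₁ = W₁' := by
  have hdet : π₁.det ≠ 0 := by
    have := hP s (Fin.castLE hs) c (fun i j h => by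
      simpa [Fin.ext_iff] using congrArg Fin.val h) hc
    rw [hπ₁]
    convert this using 2
    rfl
  have hunit : IsUnit π₁.det := isUnit_iff_ne_zero.mpr hdet
  refine ⟨hunit, fun W₁ W₁' W₂ W₂' h1 h2 => ?_⟩
  have cancel : ∀ {n : ℕ} (X Y : Matrix (Fin n) (Fin s) F),
      X * π₁ = Y * π₁ → X = Y := by
    intro n X Y h
    have := congrArg (fun M => M * π₁⁻¹) h
    simpa [Matrix.mul_assoc, Matrix.mul_nonsing_inv π₁ hunit] using this
  have hW2 : W₂ = W₂' := by
    apply cancel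
    have := congrArg (fun M => e⁻¹ • M) h2
    simpa [smul_smul, inv_mul_cancel₀ he] using this
  subst hW2
  refine ⟨rfl, ?_⟩
  set D := W₁ - W₁' with hD
  have key : a • Dᵀ + e • D = 0 := by
    apply cancel _ 0
    have : (a • Dᵀ + e • D) * π₁ = (a • (W₁ᵀ * π₁ + W₂ᵀ * π₂) + e • (W₁ * π₁))
        - (a • (W₁'ᵀ * π₁ + W₂ᵀ * π₂) + e • (W₁' * π₁)) := by
      simp only [hD, Matrix.add_mul, Matrix.sub_mul, Matrix.smul_mul, transpose_sub,
        smul_sub, smul_add]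
      abel
    rw [this, h1, sub_self, Matrix.zero_mul]
  have keyT : a • D + e • Dᵀ = 0 := by
    have := congrArg Matrix.transpose key
    simpa [transpose_add, transpose_smul] using this
  have hk1 : e • D = -(a • Dᵀ) := eq_neg_of_add_eq_zero_right key
  have hk2 : e • Dᵀ = -(a • D) := eq_neg_of_add_eq_zero_right keyT
  have hee : (e * e) • D = (a * a) • D := by
    calc (e * e) • D = e • (e • D) := (smul_smul e e D).symm
      _ = e • (-(a • Dᵀ)) := by rw [hk1]
      _ = -(a • (e • Dᵀ)) := by rw [smul_neg, smul_comm]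
      _ = -(a • (-(a • D))) := by rw [hk2]
      _ = (a * a) • D := by rw [smul_neg, neg_neg, smul_smul]
  have h3 : (a * a - e * e) • D = 0 := by
    rw [sub_smul, hee, sub_self]
  have hne : a * a - e * e ≠ 0 := by
    have heq : a * a - e * e = (a + e) * (a - e) := by ring
    rw [heq]; exact mul_ne_zero hae hae'
  have hD0 : D = 0 := by
    have := congrArg (fun M => (a * a - e * e)⁻¹ • M) h3
    simpa [smul_smul, inv_mul_cancel₀ hne] using this
  exact sub_eq_zero.mp hD0
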